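/- Let S and T be operators on functions f : ℕ → ℂ given by (Sf)(n) = (-1)^n ∑_{k=0}^{n} C(n,k)(-1)^k f(n-k) and (Tf)(n) = (-1)^n f(n). Then for every k ≥ 1 and every n, ((ST)^k f)(n) = ∑_{j=0}^{n} C(n,j) k^j f(n-j). -/

import Mathlib

open Finset

noncomputable def Sop (f : ℕ → ℂ) : ℕ → ℂ :=
  fun n => (-1) ^ n * ∑ k ∈ range (n + 1), (n.choose k : ℂ) * (-1) ^ k * f (n - k)

noncomputable def Topf (f : ℕ → ℂ) : ℕ → ℂ := fun n => (-1) ^ n * f n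

noncomputable def Bop (g : ℕ → ℂ) : ℕ → ℂ :=
  fun m => ∑ i ∈ range (m + 1), (m.choose i : ℂ) * g i

lemma Sop_Topf_eq_Bop : Sop ∘ Topf = Bop := by
  funext f n
  simp only [Function.comp_apply, Sop, Topf, Bop]
  rw [Finset.mul_sum, ← Finset.sum_range_reflect (fun i => (n.choose i : ℂ) * f i) (n + 1)]
  refine Finset.sum_congr rfl fun i hi => ?_
  simp only [Finset.mem_range, Nat.lt_succ_iff] at hi
  simp only [Nat.add_sub_cancel]
  rw [Nat.choose_symm hi]
  have h1 : ((-1 : ℂ)) ^ i * (-1) ^ (n - i) = (-1) ^ n := by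
    rw [← pow_add]; congr 1; omega
  have h2 : ((-1 : ℂ)) ^ n * ((n.choose i : ℂ) * (-1) ^ i * ((-1) ^ (n - i) * f (n - i)))
      = ((-1 : ℂ) ^ n * ((-1 : ℂ) ^ i * (-1) ^ (n - i))) * ((n.choose i : ℂ) * f (n - i)) := by
    ring
  rw [h2, h1, ← pow_add, ← two_mul, pow_mul]
  simp

lemma Bop_iterate (f : ℕ → ℂ) (k n : ℕ) :
    (Bop^[k] f) n = ∑ j ∈ range (n + 1), (n.choose j : ℂ) * (k : ℂ) ^ (n - j) * f j := by
  induction k generalizing n with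
  | zero =>
    simp only [Function.iterate_zero, id_eq]
    rw [Finset.sum_eq_single n]
    · simp
    · intro j hj hjn
      have hj' : j < n := lt_of_le_of_ne (Nat.lt_succ_iff.mp (Finset.mem_range.mp hj)) hjn
      have : n - j ≠ 0 := Nat.sub_ne_zero_of_lt hj'
      simp [zero_pow this]
    · intro h; exact absurd (Finset.self_mem_range_succ n) h
  | succ k ih =>
    rw [Function.iterate_succ_apply']
    simp only [Bop]
    have key : ∀ i ∈ range (n + 1),
        (n.choose i : ℂ) * (Bop^[k] f) i
          = ∑ j ∈ range (n + 1), (n.choose i : ℂ) * ((i.choose j : ℂ) * (k : ℂ) ^ (i - j) * f j) := by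
      intro i hi
      rw [ih i, Finset.mul_sum]
      have hi' : i < n + 1 := Finset.mem_range.mp hi
      refine Finset.sum_subset (fun x hx => ?_) (fun x _ hx => ?_)
      · simp only [Finset.mem_range] at hx ⊢; omega
      · simp only [Finset.mem_range, Nat.lt_succ_iff, not_le] at hx
        rw [Nat.choose_eq_zero_of_lt hx]
        simp
    rw [Finset.sum_congr rfl key, Finset.sum_comm]
    refine Finset.sum_congr rfl fun j hj => ?_
    simp only [Finset.mem_range, Nat.lt_succ_iff] at hj
    -- fix j; sum over i
    have : ∑ i ∈ range (n + 1), (n.choose i : ℂ) * ((i.choose j : ℂ) * (k : ℂ) ^ (i - j) * f j)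
        = (∑ i ∈ range (n + 1), (n.choose i : ℂ) * (i.choose j : ℂ) * (k : ℂ) ^ (i - j)) * f j := by
      rw [Finset.sum_mul]; refine Finset.sum_congr rfl fun i _ => by ring
    rw [this]
    have hsum : ∑ i ∈ range (n + 1), (n.choose i : ℂ) * (i.choose j : ℂ) * (k : ℂ) ^ (i - j)
        = (n.choose j : ℂ) * ((k : ℂ) + 1) ^ (n - j) := by
      rw [Finset.range_eq_Ico,
        ← Finset.sum_Ico_consecutive _ (Nat.zero_le j) (by omega : j ≤ n + 1)]
      have h0 : ∑ i ∈ Finset.Ico 0 j, (n.choose i : ℂ) * (i.choose j : ℂ) * (k : ℂ) ^ (i - j) = 0 := by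
        apply Finset.sum_eq_zero
        intro i hi
        rw [Nat.choose_eq_zero_of_lt (Finset.mem_Ico.mp hi).2]
        simp
      rw [h0, zero_add, Finset.sum_Ico_eq_sum_range]
      have hnj : n + 1 - j = n - j + 1 := by omega
      rw [hnj]
      have step : ∀ t ∈ range (n - j + 1),
          (n.choose (j + t) : ℂ) * ((j + t).choose j : ℂ) * (k : ℂ) ^ (j + t - j)
            = (n.choose j : ℂ) * (((n - j).choose t : ℂ) * (k : ℂ) ^ t) := by
        intro t ht
        simp only [Finset.mem_range, Nat.lt_succ_iff] at ht
        have h1 : j + t ≤ n := by omega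
        have h2 : j ≤ j + t := Nat.le_add_right _ _
        have := Nat.choose_mul (n := n) h2
        rw [Nat.add_sub_cancel_left] at this ⊢
        have hc : (n.choose (j + t) : ℂ) * ((j + t).choose j : ℂ)
            = (n.choose j : ℂ) * ((n - j).choose t : ℂ) := by
          exact_mod_cast congrArg (Nat.cast : ℕ → ℂ) this
        rw [← mul_assoc, hc]
      rw [Finset.sum_congr rfl step, ← Finset.mul_sum]
      congr 1
      rw [add_pow]
      refine Finset.sum_congr rfl fun t _ => ?_
      ring
    rw [hsum]
    push_cast
    ring

theorem ST_iterate (f : ℕ → ℂ) (k : ℕ) (hk : 1 ≤ k) (n : ℕ) :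
    ((Sop ∘ Topf)^[k] f) n = ∑ j ∈ range (n + 1), (n.choose j : ℂ) * (k : ℂ) ^ j * f (n - j) := by
  rw [Sop_Topf_eq_Bop, Bop_iterate,
    ← Finset.sum_range_reflect (fun j => (n.choose j : ℂ) * (k : ℂ) ^ j * f (n - j)) (n + 1)]
  refine Finset.sum_congr rfl fun j hj => ?_
  simp only [Finset.mem_range, Nat.lt_succ_iff] at hj
  simp only [Nat.add_sub_cancel]
  rw [Nat.choose_symm hj, Nat.sub_sub_self hj]
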